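/- Let R = R_{gl₂} be the standard 4×4 GL_q(2) R-matrix with q² ≠ 0, 1. In the braided-Lie algebra with structure constants c^{IJ}_K from Proposition 5.2, in the basis γ = q⁻²a + d, ξ = d − a, b, c, the brackets satisfy [b,c] = (q²−1)q⁻² ξ = −[c,b], [ξ,b] = (q⁻²+1)(q²−1) b = −q²[b,ξ], and [γ,γ] = (q⁻²+1) γ. -/
import Mathlib


open Matrix

variable {k : Type*} [Field k] {n : ℕ}

/-- Pairs of indices, labelling a basis of `V ⊗ V` (or multi-indices `I = (i₀, i₁)`). -/
abbrev I2 (n : ℕ) := Fin n × Fin n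

/-- Triples of indices, labelling a basis of `V ⊗ V ⊗ V`. -/
abbrev I3 (n : ℕ) := Fin n × Fin n × Fin n

/-- `A₁₂ = A ⊗ id`, the lift of an operator on `V ⊗ V` to the first two factors of
`V ⊗ V ⊗ V`. -/
def amp12 (A : Matrix (I2 n) (I2 n) k) : Matrix (I3 n) (I3 n) k :=
  Matrix.of fun p q => A (p.1, p.2.1) (q.1, q.2.1) * (if p.2.2 = q.2.2 then 1 else 0)

/-- `A₁₃`, acting on the first and third factors of `V ⊗ V ⊗ V`. -/
def amp13 (A : Matrix (I2 n) (I2 n) k) : Matrix (I3 n) (I3 n) k :=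
  Matrix.of fun p q => A (p.1, p.2.2) (q.1, q.2.2) * (if p.2.1 = q.2.1 then 1 else 0)

/-- `A₂₃`, acting on the last two factors of `V ⊗ V ⊗ V`. -/
def amp23 (A : Matrix (I2 n) (I2 n) k) : Matrix (I3 n) (I3 n) k :=
  Matrix.of fun p q => A (p.2.1, p.2.2) (q.2.1, q.2.2) * (if p.1 = q.1 then 1 else 0)

/-- `A₂₁ = τ ∘ A ∘ τ`, conjugation by the flip of the two tensor factors. -/
def flipM (A : Matrix (I2 n) (I2 n) k) : Matrix (I2 n) (I2 n) k :=
  Matrix.of fun p q => A (p.2, p.1) (q.2, q.1)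

/-- The quantum Yang–Baxter equation `R₁₂R₁₃R₂₃ = R₂₃R₁₃R₁₂`. -/
def QYBE (R : Matrix (I2 n) (I2 n) k) : Prop :=
  amp12 R * amp13 R * amp23 R = amp23 R * amp13 R * amp12 R

/-- `Rtil` is the second inverse `R̃ = ((R^{t₂})⁻¹)^{t₂}` of `R`, characterized by
`R̃ⁱₐᵇₗ Rᵃⱼᵏᵦ = δⁱⱼ δᵏₗ = Rⁱₐᵇₗ R̃ᵃⱼᵏᵦ` (sum over `a`, `b`).  Here the entry
`R ((i,k),(j,l))` denotes `Rⁱⱼᵏₗ`. -/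
def IsSecondInverse (R Rtil : Matrix (I2 n) (I2 n) k) : Prop :=
  (∀ i j kk l : Fin n, ∑ a, ∑ b, Rtil (i, b) (a, l) * R (a, kk) (j, b)
      = (if i = j then (1 : k) else 0) * (if kk = l then 1 else 0)) ∧
  (∀ i j kk l : Fin n, ∑ a, ∑ b, R (i, b) (a, l) * Rtil (a, kk) (j, b)
      = (if i = j then (1 : k) else 0) * (if kk = l then 1 else 0))

/-- The structure constants
`c^{IJ}_K = R̃ᵃ_{i₁}{}^{j₀}_b R⁻¹{}ᵇ_{k₀}{}^{i₀}_c R^{k₁}_n{}ᶜ_m Rᵐₐ{}ⁿ_{j₁}`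
of the matrix braided-Lie algebra associated to a bi-invertible R-matrix
(repeated indices summed). -/
def braidedC (R Rinv Rtil : Matrix (I2 n) (I2 n) k) (I J K : I2 n) : k :=
  ∑ a, ∑ b, ∑ c, ∑ m, ∑ nn,
    Rtil (a, J.1) (I.2, b) * Rinv (b, I.1) (K.1, c) *
      R (K.2, c) (nn, m) * R (m, nn) (a, J.2)

/-- The standard `GL_q(2)` R-matrix `((q,0,0,0),(0,1,q−q⁻¹,0),(0,0,1,0),(0,0,0,q))`,
with rows labelled `(i,k)` and columns `(j,l)` in the order `(1,1),(1,2),(2,1),(2,2)`. -/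
def Rgl2 (k : Type*) [Field k] (q : k) : Matrix (I2 2) (I2 2) k :=
  Matrix.of fun p r =>
    if p = r then (if p = ((0 : Fin 2), (0 : Fin 2)) ∨ p = (1, 1) then q else 1)
    else if p = ((0 : Fin 2), (1 : Fin 2)) ∧ r = (1, 0) then q - q⁻¹ else 0

/-- The `gl_{1|1}` (Alexander–Conway) R-matrix
`((q,0,0,0),(0,1,q−q⁻¹,0),(0,0,1,0),(0,0,0,−q⁻¹))`. -/
def Rgl11 (k : Type*) [Field k] (q : k) : Matrix (I2 2) (I2 2) k :=
  Matrix.of fun p r =>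
    if p = r then
      (if p = ((0 : Fin 2), (0 : Fin 2)) then q else if p = (1, 1) then -q⁻¹ else 1)
    else if p = ((0 : Fin 2), (1 : Fin 2)) ∧ r = (1, 0) then q - q⁻¹ else 0

/-- The braided-Lie bracket extended bilinearly to coefficient vectors with respect to the
basis `u^I`: `Br(x, y)_K = Σ_{I,J} x_I y_J c^{IJ}_K`. -/
def Br {k : Type*} [Field k] (R Rinv Rtil : Matrix (I2 2) (I2 2) k)
    (x y : I2 2 → k) : I2 2 → k :=
  fun K => ∑ I, ∑ J, x I * y J * braidedC R Rinv Rtil I J K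

/-- Coefficient vector of the generator `a = u¹₁`. -/
def va (k : Type*) [Field k] : I2 2 → k := fun K => if K = (0, 0) then 1 else 0

/-- Coefficient vector of the generator `b = u¹₂`. -/
def vb (k : Type*) [Field k] : I2 2 → k := fun K => if K = (0, 1) then 1 else 0

/-- Coefficient vector of the generator `c = u²₁`. -/
def vc (k : Type*) [Field k] : I2 2 → k := fun K => if K = (1, 0) then 1 else 0

/-- Coefficient vector of the generator `d = u²₂`. -/
def vd (k : Type*) [Field k] : I2 2 → k := fun K => if K = (1, 1) then 1 else 0


/-- Explicit inverse of the `GL_q(2)` R-matrix. -/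
def myRinv0 (k : Type*) [Field k] (q : k) : Matrix (I2 2) (I2 2) k :=
  Matrix.of fun p r =>
    if p = r then (if p = ((0 : Fin 2), (0 : Fin 2)) ∨ p = (1, 1) then q⁻¹ else 1)
    else if p = ((0 : Fin 2), (1 : Fin 2)) ∧ r = (1, 0) then q⁻¹ - q else 0

/-- Explicit second inverse of the `GL_q(2)` R-matrix. -/
def myRtil0 (k : Type*) [Field k] (q : k) : Matrix (I2 2) (I2 2) k :=
  Matrix.of fun p r =>
    if p = r then (if p = ((0 : Fin 2), (0 : Fin 2)) ∨ p = (1, 1) then q⁻¹ else 1)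
    else if p = ((0 : Fin 2), (1 : Fin 2)) ∧ r = (1, 0) then (q⁻¹ - q) * (q⁻¹) ^ 2 else 0

/-- Reindexing turning the second-inverse relations into genuine matrix products. -/
def mySwap (A : Matrix (I2 2) (I2 2) k) : Matrix (I2 2) (I2 2) k :=
  Matrix.of fun p r => A (p.1, r.2) (r.1, p.2)

lemma mySwap_mul_apply (A B : Matrix (I2 2) (I2 2) k) (i l j m : Fin 2) :
    (mySwap A * mySwap B) (i, l) (j, m) = ∑ a, ∑ b, A (i, b) (a, l) * B (a, m) (j, b) := by
  rw [Matrix.mul_apply, Fintype.sum_prod_type]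
  rfl

lemma myRinv0_mul (q : k) (hq0 : q ≠ 0) : myRinv0 k q * Rgl2 k q = 1 := by
  ext ⟨i, l⟩ ⟨j, m⟩
  fin_cases i <;> fin_cases l <;> fin_cases j <;> fin_cases m <;>
    · simp (config := {decide := true}) [Matrix.mul_apply, Fintype.sum_prod_type,
        Fin.sum_univ_two, Rgl2, myRinv0, Matrix.one_apply, Prod.ext_iff]
      try field_simp

lemma myRtil0_mul (q : k) (hq0 : q ≠ 0) : mySwap (myRtil0 k q) * mySwap (Rgl2 k q) = 1 := by
  ext ⟨i, l⟩ ⟨j, m⟩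
  rw [mySwap_mul_apply]
  fin_cases i <;> fin_cases l <;> fin_cases j <;> fin_cases m <;>
    · simp (config := {decide := true}) [Fin.sum_univ_two, Rgl2, myRtil0,
        Matrix.one_apply, Prod.ext_iff]
      try field_simp
      try ring

lemma rinv_eq (q : k) (hq0 : q ≠ 0) (Rinv : Matrix (I2 2) (I2 2) k)
    (h1 : Rgl2 k q * Rinv = 1) : Rinv = myRinv0 k q := by
  calc Rinv = 1 * Rinv := (one_mul _).symm
    _ = (myRinv0 k q * Rgl2 k q) * Rinv := by rw [myRinv0_mul q hq0]
    _ = myRinv0 k q * (Rgl2 k q * Rinv) := by rw [mul_assoc]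
    _ = myRinv0 k q := by rw [h1, mul_one]

lemma rtil_eq (q : k) (hq0 : q ≠ 0) (Rtil : Matrix (I2 2) (I2 2) k)
    (ht : IsSecondInverse (Rgl2 k q) Rtil) : Rtil = myRtil0 k q := by
  have h2 : mySwap (Rgl2 k q) * mySwap Rtil = 1 := by
    ext ⟨i, l⟩ ⟨j, m⟩
    rw [mySwap_mul_apply, ht.2 i j m l]
    simp only [Matrix.one_apply, Prod.ext_iff]
    split_ifs <;> simp_all
  have key : mySwap Rtil = mySwap (myRtil0 k q) := by
    calc mySwap Rtil = 1 * mySwap Rtil := (one_mul _).symm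
      _ = (mySwap (myRtil0 k q) * mySwap (Rgl2 k q)) * mySwap Rtil := by
          rw [myRtil0_mul q hq0]
      _ = mySwap (myRtil0 k q) * (mySwap (Rgl2 k q) * mySwap Rtil) := by rw [mul_assoc]
      _ = mySwap (myRtil0 k q) := by rw [h2, mul_one]
  ext ⟨i, l⟩ ⟨j, m⟩
  have := congrFun (congrFun key (i, m)) (j, l)
  simpa [mySwap] using this

/-- The explicit structure-constant table of the `GL_q(2)` braided-Lie algebra. -/
def myC (q : k) (I J K : I2 2) : k :=
  let qi := q⁻¹
  if I = ((0 : Fin 2), (0 : Fin 2)) ∧ J = ((0 : Fin 2), (0 : Fin 2)) ∧ K = ((0 : Fin 2), (0 : Fin 2)) then (1 : k)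
    else if I = ((0 : Fin 2), (0 : Fin 2)) ∧ J = ((0 : Fin 2), (1 : Fin 2)) ∧ K = ((0 : Fin 2), (1 : Fin 2)) then qi^2
    else if I = ((0 : Fin 2), (0 : Fin 2)) ∧ J = ((1 : Fin 2), (0 : Fin 2)) ∧ K = ((1 : Fin 2), (0 : Fin 2)) then q^2
    else if I = ((0 : Fin 2), (0 : Fin 2)) ∧ J = ((1 : Fin 2), (1 : Fin 2)) ∧ K = ((1 : Fin 2), (1 : Fin 2)) then (1 : k)
    else if I = ((0 : Fin 2), (1 : Fin 2)) ∧ J = ((0 : Fin 2), (0 : Fin 2)) ∧ K = ((0 : Fin 2), (1 : Fin 2)) then 1 - qi^2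
    else if I = ((0 : Fin 2), (1 : Fin 2)) ∧ J = ((1 : Fin 2), (0 : Fin 2)) ∧ K = ((0 : Fin 2), (0 : Fin 2)) then qi^2 - 1
    else if I = ((0 : Fin 2), (1 : Fin 2)) ∧ J = ((1 : Fin 2), (0 : Fin 2)) ∧ K = ((1 : Fin 2), (1 : Fin 2)) then 1 - qi^2
    else if I = ((0 : Fin 2), (1 : Fin 2)) ∧ J = ((1 : Fin 2), (1 : Fin 2)) ∧ K = ((0 : Fin 2), (1 : Fin 2)) then qi^4 - qi^2
    else if I = ((1 : Fin 2), (0 : Fin 2)) ∧ J = ((0 : Fin 2), (0 : Fin 2)) ∧ K = ((1 : Fin 2), (0 : Fin 2)) then 1 - q^2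
    else if I = ((1 : Fin 2), (0 : Fin 2)) ∧ J = ((0 : Fin 2), (1 : Fin 2)) ∧ K = ((0 : Fin 2), (0 : Fin 2)) then 1 - qi^2
    else if I = ((1 : Fin 2), (0 : Fin 2)) ∧ J = ((0 : Fin 2), (1 : Fin 2)) ∧ K = ((1 : Fin 2), (1 : Fin 2)) then qi^2 - 1
    else if I = ((1 : Fin 2), (0 : Fin 2)) ∧ J = ((1 : Fin 2), (1 : Fin 2)) ∧ K = ((1 : Fin 2), (0 : Fin 2)) then 1 - qi^2
    else if I = ((1 : Fin 2), (1 : Fin 2)) ∧ J = ((0 : Fin 2), (0 : Fin 2)) ∧ K = ((0 : Fin 2), (0 : Fin 2)) then qi^2 - 1 + q^2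
    else if I = ((1 : Fin 2), (1 : Fin 2)) ∧ J = ((0 : Fin 2), (0 : Fin 2)) ∧ K = ((1 : Fin 2), (1 : Fin 2)) then -qi^2 + 2 - q^2
    else if I = ((1 : Fin 2), (1 : Fin 2)) ∧ J = ((0 : Fin 2), (1 : Fin 2)) ∧ K = ((0 : Fin 2), (1 : Fin 2)) then q^2
    else if I = ((1 : Fin 2), (1 : Fin 2)) ∧ J = ((1 : Fin 2), (0 : Fin 2)) ∧ K = ((1 : Fin 2), (0 : Fin 2)) then qi^4 - 1 + q^2
    else if I = ((1 : Fin 2), (1 : Fin 2)) ∧ J = ((1 : Fin 2), (1 : Fin 2)) ∧ K = ((0 : Fin 2), (0 : Fin 2)) then -qi^4 + 2 * qi^2 - 1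
    else if I = ((1 : Fin 2), (1 : Fin 2)) ∧ J = ((1 : Fin 2), (1 : Fin 2)) ∧ K = ((1 : Fin 2), (1 : Fin 2)) then qi^4 - 2 * qi^2 + 2
  else 0

set_option maxHeartbeats 2000000 in
lemma braidedC_eq (q : k) (hq0 : q ≠ 0) (I J K : I2 2) :
    braidedC (Rgl2 k q) (myRinv0 k q) (myRtil0 k q) I J K = myC q I J K := by
  obtain ⟨i1, i2⟩ := I; obtain ⟨j1, j2⟩ := J; obtain ⟨k1, k2⟩ := K
  fin_cases i1 <;> fin_cases i2 <;> fin_cases j1 <;> fin_cases j2 <;>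
    fin_cases k1 <;> fin_cases k2 <;>
    · simp (config := {decide := true}) [braidedC, Fin.sum_univ_two, Rgl2, myRinv0,
        myRtil0, myC, Prod.ext_iff]
      try ring_nf
      try field_simp
      try ring_nf
      try field_simp
      try ring

set_option maxHeartbeats 1000000 in
lemma myFinal (q : k) (hq0 : q ≠ 0) :
    let R := Rgl2 k q
    let ξv : I2 2 → k := vd k - va k
    let γv : I2 2 → k := (q⁻¹) ^ 2 • va k + vd k
    Br R (myRinv0 k q) (myRtil0 k q) (vb k) (vc k) = ((q ^ 2 - 1) * (q⁻¹) ^ 2) • ξv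
    ∧ Br R (myRinv0 k q) (myRtil0 k q) (vc k) (vb k) = -(((q ^ 2 - 1) * (q⁻¹) ^ 2) • ξv)
    ∧ Br R (myRinv0 k q) (myRtil0 k q) ξv (vb k) = (((q⁻¹) ^ 2 + 1) * (q ^ 2 - 1)) • vb k
    ∧ Br R (myRinv0 k q) (myRtil0 k q) ξv (vb k)
        = (-(q ^ 2)) • Br R (myRinv0 k q) (myRtil0 k q) (vb k) ξv
    ∧ Br R (myRinv0 k q) (myRtil0 k q) γv γv = ((q⁻¹) ^ 2 + 1) • γv := by
  refine ⟨?_, ?_, ?_, ?_, ?_⟩ <;> funext K <;> obtain ⟨k1, k2⟩ := K <;>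
    fin_cases k1 <;> fin_cases k2 <;>
    · simp only [Br, braidedC_eq q hq0, Fintype.sum_prod_type, Fin.sum_univ_two, Pi.smul_apply, Pi.sub_apply, Pi.add_apply, smul_eq_mul]
      simp (config := {decide := true}) [va, vb, vc, vd, Prod.ext_iff]
      simp (config := {decide := true}) [myC, Prod.ext_iff]
      try field_simp
      try field_simp
      try ring

/-- For the standard `GL_q(2)` R-matrix with `q² ≠ 0,1`, in the basis
`γ = q⁻²a + d`, `ξ = d − a`, `b`, `c`, the braided-Lie brackets satisfy
`[b,c] = (q²−1)q⁻² ξ = −[c,b]`, `[ξ,b] = (q⁻²+1)(q²−1) b = −q²[b,ξ]`, and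
`[γ,γ] = (q⁻²+1) γ`. -/
theorem gl2_braided_brackets (q : k) (hq0 : q ≠ 0) (hq1 : q ^ 2 ≠ 1)
    (Rinv Rtil : Matrix (I2 2) (I2 2) k)
    (h1 : Rgl2 k q * Rinv = 1) (h2 : Rinv * Rgl2 k q = 1)
    (ht : IsSecondInverse (Rgl2 k q) Rtil) :
    let R := Rgl2 k q
    let ξv : I2 2 → k := vd k - va k
    let γv : I2 2 → k := (q⁻¹) ^ 2 • va k + vd k
    Br R Rinv Rtil (vb k) (vc k) = ((q ^ 2 - 1) * (q⁻¹) ^ 2) • ξv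
    ∧ Br R Rinv Rtil (vc k) (vb k) = -(((q ^ 2 - 1) * (q⁻¹) ^ 2) • ξv)
    ∧ Br R Rinv Rtil ξv (vb k) = (((q⁻¹) ^ 2 + 1) * (q ^ 2 - 1)) • vb k
    ∧ Br R Rinv Rtil ξv (vb k) = (-(q ^ 2)) • Br R Rinv Rtil (vb k) ξv
    ∧ Br R Rinv Rtil γv γv = ((q⁻¹) ^ 2 + 1) • γv := by
  have hRinv : Rinv = myRinv0 k q := rinv_eq q hq0 Rinv h1
  have hRtil : Rtil = myRtil0 k q := rtil_eq q hq0 Rtil ht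
  subst hRinv hRtil
  exact myFinal q hq0
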